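/- For integers j ≥ 0 and a parameter ζ with |ζ| < 1 and |q| < 1, one has ∑_{i=0}^{j} (-1)^i q^{i(i-1)/2} [j choose i]_q · ∑_{k=0}^{i-1} 1/(1 - ζ q^k) = - (q;q)_{j-1} / (ζ;q)_j, where for j = 0 the right-hand side is interpreted as 0. -/

import Mathlib

noncomputable def qPoch (z q : ℝ) (m : ℕ) : ℝ := ∏ j ∈ Finset.range m, (1 - z * q ^ j)

noncomputable def qBinom (q : ℝ) (m l : ℕ) : ℝ :=
  if l ≤ m then qPoch q q m / (qPoch q q l * qPoch q q (m - l)) else 0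

lemma qPoch_zero (z q : ℝ) : qPoch z q 0 = 1 := by simp [qPoch]

lemma qPoch_ne_zero {q : ℝ} (hq : |q| < 1) (n : ℕ) : qPoch q q n ≠ 0 := by
  unfold qPoch
  apply Finset.prod_ne_zero_iff.2
  intro i _
  have h1 : |q * q ^ i| < 1 := by
    rw [abs_mul, abs_pow]
    calc |q| * |q| ^ i ≤ |q| * 1 := by
          apply mul_le_mul_of_nonneg_left _ (abs_nonneg q)
          exact pow_le_one₀ (abs_nonneg q) hq.le
      _ = |q| := mul_one _
      _ < 1 := hq
  intro h
  have : q * q ^ i = 1 := by linarith [sub_eq_zero.mp h]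
  rw [this] at h1; norm_num at h1

lemma qPoch_succ (z q : ℝ) (n : ℕ) : qPoch z q (n + 1) = qPoch z q n * (1 - z * q ^ n) :=
  Finset.prod_range_succ _ _

lemma qPoch_succ' (z q : ℝ) (n : ℕ) : qPoch z q (n + 1) = (1 - z) * qPoch (z * q) q n := by
  unfold qPoch
  rw [Finset.prod_range_succ']
  simp only [pow_zero, mul_one, pow_succ]
  rw [mul_comm]
  congr 1
  apply Finset.prod_congr rfl
  intro i _
  ring_nf

lemma one_sub_q_pow_ne_zero {q : ℝ} (hq : |q| < 1) (k : ℕ) : (1 - q * q ^ k) ≠ 0 := by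
  have := qPoch_ne_zero hq (k + 1); rw [qPoch_succ] at this
  exact right_ne_zero_of_mul this

lemma qBinom_zero {q : ℝ} (hq : |q| < 1) (n : ℕ) : qBinom q n 0 = 1 := by
  unfold qBinom
  rw [if_pos (Nat.zero_le n), Nat.sub_zero, qPoch_zero, one_mul,
    div_self (qPoch_ne_zero hq n)]

lemma qBinom_self {q : ℝ} (hq : |q| < 1) (n : ℕ) : qBinom q n n = 1 := by
  unfold qBinom
  rw [if_pos le_rfl, Nat.sub_self, qPoch_zero, mul_one, div_self (qPoch_ne_zero hq n)]

lemma qBinom_of_gt {q : ℝ} {n l : ℕ} (h : n < l) : qBinom q n l = 0 := by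
  unfold qBinom; rw [if_neg (by omega)]

-- q-Pascal rule, form 1: [m+1, k+1] = [m, k] + q^(k+1) [m, k+1]
lemma pascal1 {q : ℝ} (hq : |q| < 1) (m k : ℕ) (hk : k ≤ m) :
    qBinom q (m + 1) (k + 1) = qBinom q m k + q ^ (k + 1) * qBinom q m (k + 1) := by
  rcases Nat.lt_or_ge k m with h | h
  · unfold qBinom
    rw [if_pos (by omega), if_pos (by omega), if_pos (by omega)]
    have key : q * q ^ m = (q * q ^ k) * (q * q ^ (m - (k + 1))) := by
      conv_lhs => rw [show m = k + 1 + (m - (k + 1)) from by omega]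
      rw [pow_add]
      ring
    have e1 : m + 1 - (k + 1) = m - k := by omega
    have e2 : m - k = (m - (k + 1)) + 1 := by omega
    have e3 : qPoch q q (m - k) = qPoch q q (m - (k+1)) * (1 - q * q ^ (m - (k+1))) := by
      rw [e2, qPoch_succ]
    have e4 : qPoch q q (k + 1) = qPoch q q k * (1 - q * q ^ k) := qPoch_succ _ _ _
    have e5 : qPoch q q (m + 1)
        = qPoch q q m * (1 - (q * q ^ k) * (q * q ^ (m - (k+1)))) := by
      rw [qPoch_succ, key]
    rw [e1, e3, e4, e5, pow_succ' q k]
    have h1 := qPoch_ne_zero hq k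
    have h2 := qPoch_ne_zero hq (m - (k+1))
    have h3 := qPoch_ne_zero hq m
    have h4 : (1 - q * q ^ k) ≠ 0 := one_sub_q_pow_ne_zero hq k
    have h5 : (1 - q * q ^ (m - (k+1))) ≠ 0 := one_sub_q_pow_ne_zero hq (m - (k+1))
    field_simp
    ring
  · have hkm : k = m := by omega
    subst hkm
    rw [qBinom_self hq, qBinom_self hq, qBinom_of_gt (by omega)]
    ring

-- q-Pascal rule, form 2: [m+1, k+1] = [m, k+1] + q^(m-k) [m, k]
lemma pascal2 {q : ℝ} (hq : |q| < 1) (m k : ℕ) (hk : k ≤ m) :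
    qBinom q (m + 1) (k + 1) = qBinom q m (k + 1) + q ^ (m - k) * qBinom q m k := by
  rcases Nat.lt_or_ge k m with h | h
  · unfold qBinom
    rw [if_pos (by omega), if_pos (by omega), if_pos (by omega)]
    have key : q * q ^ m = (q * q ^ k) * (q * q ^ (m - (k + 1))) := by
      conv_lhs => rw [show m = k + 1 + (m - (k + 1)) from by omega]
      rw [pow_add]
      ring
    have key2 : q ^ (m - k) = q * q ^ (m - (k+1)) := by
      rw [← pow_succ']; congr 1; omega
    have e1 : m + 1 - (k + 1) = m - k := by omega
    have e2 : m - k = (m - (k + 1)) + 1 := by omega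
    have e3 : qPoch q q (m - k) = qPoch q q (m - (k+1)) * (1 - q * q ^ (m - (k+1))) := by
      rw [e2, qPoch_succ]
    have e4 : qPoch q q (k + 1) = qPoch q q k * (1 - q * q ^ k) := qPoch_succ _ _ _
    have e5 : qPoch q q (m + 1)
        = qPoch q q m * (1 - (q * q ^ k) * (q * q ^ (m - (k+1)))) := by
      rw [qPoch_succ, key]
    rw [e1, e3, e4, e5, key2]
    have h1 := qPoch_ne_zero hq k
    have h2 := qPoch_ne_zero hq (m - (k+1))
    have h3 := qPoch_ne_zero hq m
    have h4 : (1 - q * q ^ k) ≠ 0 := one_sub_q_pow_ne_zero hq k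
    have h5 : (1 - q * q ^ (m - (k+1))) ≠ 0 := one_sub_q_pow_ne_zero hq (m - (k+1))
    field_simp
    ring
  · have hkm : k = m := by omega
    subst hkm
    rw [qBinom_self hq, qBinom_self hq, qBinom_of_gt (by omega)]
    simp

lemma tri_succ (k : ℕ) : (k + 1) * (k + 2) / 2 = k * (k + 1) / 2 + (k + 1) := by
  have : (k + 1) * (k + 2) = k * (k + 1) + (k + 1) * 2 := by ring
  rw [this, Nat.add_mul_div_right _ _ (by norm_num : 0 < 2)]

-- partial sum identity
lemma partial_sum {q : ℝ} (hq : |q| < 1) (m : ℕ) :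
    ∀ k ≤ m, ∑ i ∈ Finset.range (k + 1),
      (-1 : ℝ) ^ i * q ^ (i * (i - 1) / 2) * qBinom q (m + 1) i
      = (-1 : ℝ) ^ k * q ^ (k * (k + 1) / 2) * qBinom q m k := by
  intro k hk
  induction k with
  | zero => simp [qBinom_zero hq]
  | succ k ih =>
    rw [Finset.sum_range_succ, ih (by omega), pascal1 hq m k (by omega)]
    have e1 : (k + 1) * (k + 1 - 1) / 2 = k * (k + 1) / 2 := by
      congr 1
      rw [Nat.add_sub_cancel, Nat.mul_comm]
    have e2 : (k + 1) * (k + 1 + 1) / 2 = k * (k + 1) / 2 + (k + 1) := tri_succ k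
    rw [e1, e2, pow_add]
    ring

lemma total_sum_zero {q : ℝ} (hq : |q| < 1) (m : ℕ) :
    ∑ i ∈ Finset.range (m + 2),
      (-1 : ℝ) ^ i * q ^ (i * (i - 1) / 2) * qBinom q (m + 1) i = 0 := by
  rw [Finset.sum_range_succ, partial_sum hq m m le_rfl, qBinom_self hq, qBinom_self hq]
  have e1 : (m + 1) * (m + 1 - 1) / 2 = m * (m + 1) / 2 := by
    congr 1
    rw [Nat.add_sub_cancel, Nat.mul_comm]
  rw [e1]; ring

-- partial fraction identity
lemma pfrac {q : ℝ} (hq : |q| < 1) :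
    ∀ (m : ℕ) (z : ℝ), (∀ k ≤ m, 1 - z * q ^ k ≠ 0) →
    ∑ k ∈ Finset.range (m + 1),
      (-1 : ℝ) ^ k * q ^ (k * (k + 1) / 2) * qBinom q m k / (1 - z * q ^ k)
      = qPoch q q m / qPoch z q (m + 1) := by
  intro m
  induction m with
  | zero =>
    intro z hz
    simp [qBinom_zero hq, qPoch, Finset.prod_range_succ]
  | succ m ih =>
    intro z hz
    have hsplit : ∀ k ∈ Finset.range (m + 2),
        (-1 : ℝ) ^ k * q ^ (k * (k + 1) / 2) * qBinom q (m+1) k / (1 - z * q ^ k)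
        = (-1 : ℝ) ^ k * q ^ (k * (k + 1) / 2) * qBinom q m k / (1 - z * q ^ k)
          + (if k = 0 then 0 else
             (-1 : ℝ) ^ k * q ^ (k * (k + 1) / 2) * q ^ (m + 1 - k) * qBinom q m (k-1) / (1 - z * q ^ k)) := by
      intro k hkr
      rcases k with _ | k
      · simp [qBinom_zero hq]
      · rw [if_neg (by omega)]
        rw [pascal2 hq m k (by simp at hkr; omega)]
        simp only [Nat.add_sub_cancel]
        have : m + 1 - (k + 1) = m - k := by omega
        rw [this]
        ring
    rw [Finset.sum_congr rfl hsplit, Finset.sum_add_distrib]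
    have hz' : ∀ k ≤ m, 1 - z * q ^ k ≠ 0 := fun k hk => hz k (by omega)
    have part1 : ∑ k ∈ Finset.range (m + 2),
        (-1 : ℝ) ^ k * q ^ (k * (k + 1) / 2) * qBinom q m k / (1 - z * q ^ k)
        = qPoch q q m / qPoch z q (m + 1) := by
      rw [Finset.sum_range_succ, qBinom_of_gt (by omega)]
      simp [ih z hz']
    have hzq : ∀ k ≤ m, 1 - (z * q) * q ^ k ≠ 0 := by
      intro k hk
      have := hz (k + 1) (by omega)
      rwa [pow_succ', ← mul_assoc] at this
    have part2 : ∑ k ∈ Finset.range (m + 2), (if k = 0 then 0 else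
             (-1 : ℝ) ^ k * q ^ (k * (k + 1) / 2) * q ^ (m + 1 - k) * qBinom q m (k-1) / (1 - z * q ^ k))
        = -q ^ (m+1) * (qPoch q q m / qPoch (z*q) q (m + 1)) := by
      rw [Finset.sum_range_succ']
      norm_num
      rw [← ih (z * q) hzq, Finset.mul_sum, ← Finset.sum_neg_distrib]
      apply Finset.sum_congr rfl
      intro k hkr
      have e3 : (k+1) * (k + 1 + 1) / 2 = k * (k+1) / 2 + (k+1) := tri_succ k
      rw [e3]
      have e4 : m + 1 - (k + 1) = m - k := by omega
      rw [e4]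
      have e5 : z * q * q ^ k = z * q ^ (k + 1) := by rw [pow_succ']; ring
      rw [e5]
      have epow : q ^ (k * (k+1) / 2 + (k+1)) * q ^ (m - k)
          = q ^ (k * (k+1) / 2) * q ^ (m+1) := by
        rw [← pow_add, ← pow_add]
        congr 1
        have hkm : k ≤ m := by simp at hkr; omega
        omega
      rw [div_eq_mul_inv, div_eq_mul_inv, pow_succ (-1 : ℝ) k]
      linear_combination (-(-1 : ℝ)^k * qBinom q m k * (1 - z * q ^ (k+1))⁻¹) * epow
    rw [part1, part2]
    -- final algebra
    have h0 : (1 - z) ≠ 0 := by simpa using hz 0 (by omega)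
    have htop : (1 - z * q ^ (m+1)) ≠ 0 := hz (m+1) le_rfl
    have hy : qPoch (z*q) q m ≠ 0 := by
      unfold qPoch
      apply Finset.prod_ne_zero_iff.2
      intro i hi
      exact hzq i (by simp at hi; omega)
    have r1 : qPoch z q (m + 1) = (1 - z) * qPoch (z*q) q m := qPoch_succ' z q m
    have r2 : qPoch z q (m + 2) = (1 - z) * (qPoch (z*q) q m * (1 - z * q ^ (m+1))) := by
      rw [qPoch_succ, r1]; ring
    have r3 : qPoch (z*q) q (m + 1) = qPoch (z*q) q m * (1 - z * q ^ (m+1)) := by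
      rw [qPoch_succ]
      congr 2
      rw [pow_succ']; ring
    have r4 : qPoch q q (m + 1) = qPoch q q m * (1 - q * q ^ m) := qPoch_succ _ _ _
    rw [r1, r2, r3, r4]
    rw [show q ^ (m + 1) = q * q ^ m from pow_succ' q m] at htop ⊢
    have htop' : 1 - z * q * q ^ m ≠ 0 := by rwa [mul_assoc]
    field_simp
    ring

-- swap the double sum
lemma swap_sum (f : ℕ → ℕ → ℝ) (n : ℕ) :
    ∑ i ∈ Finset.range n, ∑ k ∈ Finset.range i, f i k
      = ∑ k ∈ Finset.range n, ∑ i ∈ Finset.Ico (k+1) n, f i k := by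
  induction n with
  | zero => simp
  | succ n ih =>
    rw [Finset.sum_range_succ, ih, Finset.sum_range_succ]
    have h1 : ∀ k ∈ Finset.range n, ∑ i ∈ Finset.Ico (k+1) (n+1), f i k
        = (∑ i ∈ Finset.Ico (k+1) n, f i k) + f n k := by
      intro k hk
      simp at hk
      rw [Finset.sum_Ico_succ_top (by omega)]
    rw [Finset.sum_congr rfl h1, Finset.sum_add_distrib]
    simp

theorem alternating_qbinom_sum (q ζ : ℝ) (j : ℕ) (hq : |q| < 1) (hζ : |ζ| < 1)
    (hne : ∀ k < j, 1 - ζ * q ^ k ≠ 0) :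
    ∑ i ∈ Finset.range (j + 1),
        (-1 : ℝ) ^ i * q ^ (i * (i - 1) / 2) * qBinom q j i *
          (∑ k ∈ Finset.range i, 1 / (1 - ζ * q ^ k))
      = if j = 0 then 0 else -(qPoch q q (j - 1)) / qPoch ζ q j := by
  rcases j with _ | m
  · simp
  rw [if_neg (Nat.succ_ne_zero m)]
  simp only [Nat.add_sub_cancel]
  have step1 : ∑ i ∈ Finset.range (m + 2),
        (-1 : ℝ) ^ i * q ^ (i * (i - 1) / 2) * qBinom q (m+1) i *
          (∑ k ∈ Finset.range i, 1 / (1 - ζ * q ^ k))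
      = ∑ i ∈ Finset.range (m + 2), ∑ k ∈ Finset.range i,
          (-1 : ℝ) ^ i * q ^ (i * (i - 1) / 2) * qBinom q (m+1) i * (1 / (1 - ζ * q ^ k)) := by
    apply Finset.sum_congr rfl
    intro i _
    rw [Finset.mul_sum]
  rw [step1, swap_sum]
  have step3 : ∀ k ∈ Finset.range (m + 2),
      (∑ i ∈ Finset.Ico (k+1) (m+2),
        (-1 : ℝ) ^ i * q ^ (i * (i - 1) / 2) * qBinom q (m+1) i * (1 / (1 - ζ * q ^ k)))
      = -((-1 : ℝ) ^ k * q ^ (k * (k + 1) / 2) * qBinom q m k / (1 - ζ * q ^ k)) := by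
    intro k hk
    simp only [Finset.mem_range] at hk
    rw [← Finset.sum_mul, Finset.sum_Ico_eq_sub _ (by omega : k + 1 ≤ m + 2),
      total_sum_zero hq m]
    rcases Nat.lt_or_ge k (m+1) with h | h
    · rw [partial_sum hq m k (by omega)]
      ring
    · have : k = m + 1 := by omega
      subst this
      rw [Finset.sum_range_succ, partial_sum hq m m le_rfl, qBinom_self hq,
        qBinom_of_gt (Nat.lt_succ_self m)]
      have e1 : (m + 1) * (m + 1 - 1) / 2 = m * (m + 1) / 2 := by
        congr 1
        rw [Nat.add_sub_cancel, Nat.mul_comm]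
      rw [e1, qBinom_self hq]; ring
  rw [Finset.sum_congr rfl step3]
  have hz : ∀ k ≤ m, 1 - ζ * q ^ k ≠ 0 := fun k hk => hne k (by omega)
  rw [Finset.sum_range_succ, qBinom_of_gt (m.lt_succ_self)]
  simp only [mul_zero, zero_mul, zero_div, neg_zero, add_zero]
  rw [Finset.sum_neg_distrib, pfrac hq m ζ hz, neg_div]
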